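/- Let (A, B, H) be a finite-dimensional P-module and suppose a nonzero vector ξ ∈ H is contained in a ray p (i.e., ‖pₙξ‖ = ‖ξ‖ for all n). Then p is eventually periodic, and moreover p has a period of length at most dim(H). -/

import Mathlib

open Filter Topology
open scoped InnerProductSpace

/-- Action of a finite binary word on a vector: digit `false` acts by `A`,
digit `true` by `B`, with the first digit acting first. -/
noncomputable def wordAct {H : Type*} [NormedAddCommGroup H] [InnerProductSpace ℂ H]
    (A B : H →L[ℂ] H) : List Bool → H → H
  | [], ξ => ξ
  | b :: rest, ξ => wordAct A B rest ((if b then B else A) ξ)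

/-- The length-`n` prefix of a ray `p : ℕ → Bool` as a list. -/
def pre (p : ℕ → Bool) (n : ℕ) : List Bool := List.ofFn fun i : Fin n => p i

/-- The Pythagorean equality `A*A + B*B = id`. -/
def IsPyth {H : Type*} [NormedAddCommGroup H] [InnerProductSpace ℂ H] [CompleteSpace H]
    (A B : H →L[ℂ] H) : Prop :=
  (ContinuousLinearMap.adjoint A).comp A + (ContinuousLinearMap.adjoint B).comp B =
    ContinuousLinearMap.id ℂ H

/-- `ξ` is a nonzero vector contained in the ray `p`. -/
noncomputable def ContainedIn {H : Type*} [NormedAddCommGroup H] [InnerProductSpace ℂ H]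
    (A B : H →L[ℂ] H) (p : ℕ → Bool) (ξ : H) : Prop :=
  ξ ≠ 0 ∧ ∀ n : ℕ, ‖wordAct A B (pre p n) ξ‖ = ‖ξ‖

section Aux

variable {H : Type*} [NormedAddCommGroup H] [InnerProductSpace ℂ H]

/-- One-letter operator. -/
noncomputable def opC (A B : H →L[ℂ] H) (b : Bool) : H →L[ℂ] H := if b then B else A

@[simp] lemma opC_false (A B : H →L[ℂ] H) : opC A B false = A := rfl
@[simp] lemma opC_true (A B : H →L[ℂ] H) : opC A B true = B := rfl

/-- The operator of the length-`n` prefix of the ray `q`. -/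
noncomputable def opW (A B : H →L[ℂ] H) (q : ℕ → Bool) : ℕ → (H →L[ℂ] H)
  | 0 => ContinuousLinearMap.id ℂ H
  | n + 1 => (opC A B (q n)).comp (opW A B q n)

@[simp] lemma opW_zero (A B : H →L[ℂ] H) (q : ℕ → Bool) (x : H) :
    opW A B q 0 x = x := rfl

lemma opW_succ (A B : H →L[ℂ] H) (q : ℕ → Bool) (n : ℕ) (x : H) :
    opW A B q (n + 1) x = opC A B (q n) (opW A B q n x) := rfl

lemma wordAct_append (A B : H →L[ℂ] H) (l : List Bool) (b : Bool) (x : H) :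
    wordAct A B (l ++ [b]) x = (if b then B else A) (wordAct A B l x) := by
  induction l generalizing x with
  | nil => rfl
  | cons c l ih => simp [wordAct, ih]

lemma wordAct_pre (A B : H →L[ℂ] H) (q : ℕ → Bool) (n : ℕ) (x : H) :
    wordAct A B (pre q n) x = opW A B q n x := by
  induction n with
  | zero => rfl
  | succ n ih =>
    have hpre : pre q (n + 1) = pre q n ++ [q n] := by
      simp only [pre]
      rw [List.ofFn_succ']
      simp [List.concat_eq_append]
    rw [hpre, wordAct_append, ih, opW_succ, opC]

lemma pyth_norm {H : Type*} [NormedAddCommGroup H] [InnerProductSpace ℂ H] [CompleteSpace H]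
    {A B : H →L[ℂ] H} (hAB : IsPyth A B) (x : H) :
    ‖A x‖ ^ 2 + ‖B x‖ ^ 2 = ‖x‖ ^ 2 := by
  have h1 : ⟪(ContinuousLinearMap.adjoint A) (A x), x⟫_ℂ
      + ⟪(ContinuousLinearMap.adjoint B) (B x), x⟫_ℂ = ⟪x, x⟫_ℂ := by
    rw [← inner_add_left]
    have := congrArg (fun T : H →L[ℂ] H => (⟪T x, x⟫_ℂ : ℂ)) hAB
    simpa [inner_add_left] using this
  rw [ContinuousLinearMap.adjoint_inner_left, ContinuousLinearMap.adjoint_inner_left,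
    inner_self_eq_norm_sq_to_K, inner_self_eq_norm_sq_to_K, inner_self_eq_norm_sq_to_K] at h1
  exact_mod_cast h1

/-- If the complementary letter kills `x`, the letter acts isometrically on `x`. -/
lemma norm_opC {H : Type*} [NormedAddCommGroup H] [InnerProductSpace ℂ H] [CompleteSpace H]
    {A B : H →L[ℂ] H} (hAB : IsPyth A B) {b : Bool} {x : H}
    (h : opC A B (!b) x = 0) : ‖opC A B b x‖ = ‖x‖ := by
  have hp := pyth_norm hAB x
  cases b
  · have h' : B x = 0 := by simpa using h
    rw [h', norm_zero] at hp
    rw [opC_false]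
    nlinarith [sq_nonneg (‖A x‖ - ‖x‖), sq_nonneg (‖A x‖ + ‖x‖), norm_nonneg (A x),
      norm_nonneg x]
  · have h' : A x = 0 := by simpa using h
    rw [h', norm_zero] at hp
    rw [opC_true]
    nlinarith [sq_nonneg (‖B x‖ - ‖x‖), sq_nonneg (‖B x‖ + ‖x‖), norm_nonneg (B x),
      norm_nonneg x]

/-- `η` follows the itinerary `q`: at each stage the complementary letter kills it. -/
def Follows (A B : H →L[ℂ] H) (q : ℕ → Bool) (η : H) : Prop :=
  ∀ n, opC A B (!(q n)) (opW A B q n η) = 0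

lemma follows_norm {H : Type*} [NormedAddCommGroup H] [InnerProductSpace ℂ H] [CompleteSpace H]
    {A B : H →L[ℂ] H} (hAB : IsPyth A B) {q : ℕ → Bool} {η : H}
    (h : Follows A B q η) (n : ℕ) : ‖opW A B q n η‖ = ‖η‖ := by
  induction n with
  | zero => rfl
  | succ n ih => rw [opW_succ, norm_opC hAB (h n), ih]

lemma opW_congr (A B : H →L[ℂ] H) {q q' : ℕ → Bool} {n : ℕ}
    (h : ∀ m < n, q m = q' m) : opW A B q n = opW A B q' n := by
  induction n with
  | zero => rfl
  | succ n ih =>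
    have h1 : opW A B q n = opW A B q' n := ih fun m hm => h m (Nat.lt_succ_of_lt hm)
    show (opC A B (q n)).comp (opW A B q n) = (opC A B (q' n)).comp (opW A B q' n)
    rw [h1, h n (Nat.lt_succ_self n)]

lemma opW_shift (A B : H →L[ℂ] H) (q : ℕ → Bool) (m n : ℕ) (x : H) :
    opW A B (fun k => q (m + k)) n (opW A B q m x) = opW A B q (m + n) x := by
  induction n with
  | zero => rfl
  | succ n ih =>
    rw [opW_succ, ih, ← Nat.add_assoc, opW_succ]

lemma follows_shift {A B : H →L[ℂ] H} {q : ℕ → Bool} {η : H}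
    (h : Follows A B q η) (m : ℕ) :
    Follows A B (fun k => q (m + k)) (opW A B q m η) := by
  intro n
  rw [opW_shift]
  exact h (m + n)

lemma follows_smul {A B : H →L[ℂ] H} {q : ℕ → Bool} {η : H}
    (h : Follows A B q η) (c : ℂ) : Follows A B q (c • η) := by
  intro n
  rw [map_smul, map_smul, h n, smul_zero]

/-- Nonzero vectors following pairwise distinct itineraries have nonzero sum. -/
lemma key_sum_ne_zero {H : Type*} [NormedAddCommGroup H] [InnerProductSpace ℂ H]
    [CompleteSpace H] {A B : H →L[ℂ] H} (hAB : IsPyth A B)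
    {ι : Type*} [DecidableEq ι] :
    ∀ (s : Finset ι) (q : ι → ℕ → Bool) (η : ι → H),
      s.Nonempty →
      (∀ i ∈ s, Follows A B (q i) (η i)) →
      (∀ i ∈ s, η i ≠ 0) →
      (∀ i ∈ s, ∀ j ∈ s, q i = q j → i = j) →
      ∑ i ∈ s, η i ≠ 0 := by
  intro s
  induction s using Finset.strongInductionOn with
  | _ s ih =>
    intro q η hne hF hnz hinj hsum
    by_cases hall : ∀ n, ∀ i ∈ s, ∀ j ∈ s, q i n = q j n
    · -- all itineraries agree, so `s` is a singleton
      obtain ⟨i0, hi0⟩ := hne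
      have hsingle : ∀ j ∈ s, j = i0 := by
        intro j hj
        exact hinj j hj i0 hi0 (funext fun n => hall n j hj i0 hi0)
      have : s = {i0} := Finset.eq_singleton_iff_unique_mem.2 ⟨hi0, hsingle⟩
      rw [this, Finset.sum_singleton] at hsum
      exact hnz i0 hi0 hsum
    · push_neg at hall
      have hex : ∃ n, ∃ i ∈ s, ∃ j ∈ s, q i n ≠ q j n := by
        obtain ⟨n, i, hi, j, hj, hne'⟩ := hall
        exact ⟨n, i, hi, j, hj, hne'⟩
      classical
      set n := Nat.find hex with hn_def
      obtain ⟨i1, hi1, j1, hj1, hdiff⟩ : ∃ i ∈ s, ∃ j ∈ s, q i n ≠ q j n := Nat.find_spec hex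
      have hbelow : ∀ m < n, ∀ i ∈ s, ∀ j ∈ s, q i m = q j m := by
        intro m hm i hi j hj
        by_contra hc
        exact Nat.find_min hex hm ⟨i, hi, j, hj, hc⟩
      have hWeq : ∀ i ∈ s, opW A B (q i) n = opW A B (q i1) n := fun i hi =>
        opW_congr A B fun m hm => hbelow m hm i hi i1 hi1
      -- one of i1, j1 has digit `true`, the other `false`
      obtain ⟨iT, hiT, hiTtrue, iF, hiF, hiFfalse⟩ :
          ∃ iT ∈ s, q iT n = true ∧ ∃ iF ∈ s, q iF n = false := by
        cases hT : q i1 n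
        · cases hJ : q j1 n
          · rw [hT, hJ] at hdiff; exact absurd rfl hdiff
          · exact ⟨j1, hj1, hJ, i1, hi1, hT⟩
        · cases hJ : q j1 n
          · exact ⟨i1, hi1, hT, j1, hj1, hJ⟩
          · rw [hT, hJ] at hdiff; exact absurd rfl hdiff
      set sA : Finset ι := s.filter (fun i => q i n = true) with hsA
      have hsub : sA ⊆ s := Finset.filter_subset _ _
      have hssub : sA ⊂ s := by
        rw [Finset.ssubset_iff_of_subset hsub]
        exact ⟨iF, hiF, by simp [hsA, hiFfalse]⟩
      have hAne : sA.Nonempty := ⟨iT, by simp [hsA, hiT, hiTtrue]⟩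
      -- apply `B ∘ opW (q i1) n` to the sum
      have hzero : ∑ i ∈ sA, opW A B (q i) (n + 1) (η i) = 0 := by
        have h1 : B (opW A B (q i1) n (∑ i ∈ s, η i)) = 0 := by
          rw [hsum, map_zero, map_zero]
        rw [map_sum, map_sum] at h1
        have h2 : ∀ i ∈ s, B (opW A B (q i1) n (η i)) =
            (if q i n = true then opW A B (q i) (n + 1) (η i) else 0) := by
          intro i hi
          rw [← hWeq i hi]
          cases hqi : q i n
          · simpa [hqi] using hF i hi n
          · simp [hqi, opW_succ]
        rw [Finset.sum_congr rfl h2] at h1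
        rw [hsA, Finset.sum_filter]
        exact h1
      -- apply the induction hypothesis to `sA` with shifted itineraries
      refine ih sA hssub (fun i k => q i (n + 1 + k))
        (fun i => opW A B (q i) (n + 1) (η i)) hAne ?_ ?_ ?_ hzero
      · intro i hi
        exact follows_shift (hF i (hsub hi)) (n + 1)
      · intro i hi
        show opW A B (q i) (n + 1) (η i) ≠ 0
        intro h0
        have hnm := follows_norm hAB (hF i (hsub hi)) (n + 1)
        rw [h0, norm_zero] at hnm
        exact hnz i (hsub hi) (norm_eq_zero.mp hnm.symm)
      · intro i hi j hj hq
        refine hinj i (hsub hi) j (hsub hj) (funext fun m => ?_)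
        rcases lt_trichotomy m n with hm | hm | hm
        · exact hbelow m hm i (hsub hi) j (hsub hj)
        · have h1 : q i n = true := by
            have := (Finset.mem_filter.mp (hsA ▸ hi)).2
            exact this
          have h2 : q j n = true := by
            have := (Finset.mem_filter.mp (hsA ▸ hj)).2
            exact this
          rw [hm, h1, h2]
        · obtain ⟨k, hk⟩ := Nat.exists_eq_add_of_le (Nat.succ_le_of_lt hm)
          rw [hk]
          exact congrFun hq k

end Aux

theorem stmt5 {H : Type*} [NormedAddCommGroup H] [InnerProductSpace ℂ H]
    [FiniteDimensional ℂ H] (A B : H →L[ℂ] H) (hAB : IsPyth A B)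
    (p : ℕ → Bool) (ξ : H) (hξ : ContainedIn A B p ξ) :
    ∃ d : ℕ, 0 < d ∧ d ≤ Module.finrank ℂ H ∧ ∃ N : ℕ, ∀ n ≥ N, p (n + d) = p n := by
  classical
  obtain ⟨hξ0, hξn⟩ := hξ
  set D := Module.finrank ℂ H with hD
  -- the orbit vectors and basic facts
  have hnorm : ∀ n, ‖opW A B p n ξ‖ = ‖ξ‖ := by
    intro n; rw [← wordAct_pre]; exact hξn n
  have hfol : Follows A B p ξ := by
    intro n
    have hx : ‖opW A B p n ξ‖ = ‖ξ‖ := hnorm n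
    have hx1 : ‖opC A B (p n) (opW A B p n ξ)‖ = ‖ξ‖ := by
      rw [← opW_succ]; exact hnorm (n + 1)
    have hp := pyth_norm hAB (opW A B p n ξ)
    rw [hx] at hp
    cases hpn : p n
    · rw [hpn, opC_false] at hx1
      rw [hx1] at hp
      have hB2 : ‖B (opW A B p n ξ)‖ ^ 2 = 0 := by linarith
      have hB : ‖B (opW A B p n ξ)‖ = 0 := pow_eq_zero_iff (two_ne_zero) |>.mp hB2
      simpa using norm_eq_zero.mp hB
    · rw [hpn, opC_true] at hx1
      rw [hx1] at hp
      have hA2 : ‖A (opW A B p n ξ)‖ ^ 2 = 0 := by linarith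
      have hA : ‖A (opW A B p n ξ)‖ = 0 := pow_eq_zero_iff (two_ne_zero) |>.mp hA2
      simpa using norm_eq_zero.mp hA
  -- tails of p
  set t : Fin (D + 1) → ℕ → Bool := fun a k => p ((a : ℕ) + k) with ht
  -- if the first D+1 tails were pairwise distinct, we would get D+1 independent vectors
  have hnotinj : ¬ (∀ a b : Fin (D + 1), t a = t b → a = b) := by
    intro hinj
    have hli : LinearIndependent ℂ (fun a : Fin (D + 1) => opW A B p (a : ℕ) ξ) := by
      rw [Fintype.linearIndependent_iff]
      intro g hg
      by_contra hc
      push_neg at hc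
      obtain ⟨a0, ha0⟩ := hc
      set s : Finset (Fin (D + 1)) := Finset.univ.filter (fun a => g a ≠ 0) with hs
      have hne : s.Nonempty := ⟨a0, by simp [hs, ha0]⟩
      have hsum : ∑ a ∈ s, g a • opW A B p (a : ℕ) ξ = 0 := by
        have heq : ∑ a ∈ s, g a • opW A B p (a : ℕ) ξ
            = ∑ a : Fin (D + 1), g a • opW A B p (a : ℕ) ξ := by
          rw [hs, Finset.sum_filter]
          refine Finset.sum_congr rfl fun x _ => ?_
          by_cases h0 : g x = 0 <;> simp [h0]
        rw [heq]
        exact hg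
      refine key_sum_ne_zero hAB s t (fun a => g a • opW A B p (a : ℕ) ξ) hne ?_ ?_ ?_ hsum
      · intro a _
        exact follows_smul (follows_shift hfol (a : ℕ)) (g a)
      · intro a ha
        have hg0 : g a ≠ 0 := by
          have := (Finset.mem_filter.mp (hs ▸ ha)).2
          exact this
        have hv : opW A B p (a : ℕ) ξ ≠ 0 := by
          intro h0
          have := hnorm (a : ℕ)
          rw [h0, norm_zero] at this
          exact hξ0 (norm_eq_zero.mp this.symm)
        exact smul_ne_zero hg0 hv
      · intro a _ b _ hq
        exact hinj a b hq
    have hcard := hli.fintype_card_le_finrank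
    rw [Fintype.card_fin, ← hD] at hcard
    omega
  push_neg at hnotinj
  obtain ⟨a, b, htab, hab⟩ := hnotinj
  have hk : ∀ k, p ((a : ℕ) + k) = p ((b : ℕ) + k) := fun k => congrFun htab k
  rcases hab.lt_or_gt with hlt | hlt
  · refine ⟨(b : ℕ) - (a : ℕ), ?_, ?_, (a : ℕ), fun n hn => ?_⟩
    · have : (a : ℕ) < (b : ℕ) := hlt
      omega
    · have := b.isLt
      omega
    · have hab' : (a : ℕ) < (b : ℕ) := hlt
      have h1 := hk (n - (a : ℕ))
      have h2 : (a : ℕ) + (n - (a : ℕ)) = n := by omega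
      have h3 : (b : ℕ) + (n - (a : ℕ)) = n + ((b : ℕ) - (a : ℕ)) := by omega
      rw [h2, h3] at h1
      exact h1.symm
  · refine ⟨(a : ℕ) - (b : ℕ), ?_, ?_, (b : ℕ), fun n hn => ?_⟩
    · have : (b : ℕ) < (a : ℕ) := hlt
      omega
    · have := a.isLt
      omega
    · have hab' : (b : ℕ) < (a : ℕ) := hlt
      have h1 := hk (n - (b : ℕ))
      have h2 : (b : ℕ) + (n - (b : ℕ)) = n := by omega
      have h3 : (a : ℕ) + (n - (b : ℕ)) = n + ((a : ℕ) - (b : ℕ)) := by omega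
      rw [h2, h3] at h1
      exact h1
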